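/- Let h ∈ ℝ^p, and suppose {1,…,p} is partitioned into blocks T₁,…,T_q each of size at most t, where T₂ contains the t largest (in absolute value) entries of h outside T₁, T₃ the next t largest, and so on. Then ∑_{i=3}^q ‖h_{T_i}‖₂ ≤ ‖h_{T₁^c}‖₁ / √t. -/

import Mathlib

open Finset Real

/-- Block decomposition bound: if `{1,…,p}` is partitioned into blocks `T 1, …, T q`
of size at most `t`, where for `i ≥ 3` every entry of `h` on `T i` is bounded in
absolute value by the average absolute value of `h` on `T (i−1)`, then
`∑_{i=3}^q ‖h_{T i}‖₂ ≤ ‖h_{(T 1)ᶜ}‖₁ / √t`. -/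
theorem block_l2_sum_bound {p : ℕ} (h : Fin p → ℝ) (q t : ℕ) (ht : 0 < t)
    (T : ℕ → Finset (Fin p))
    (hdisj : ∀ i ∈ Finset.Icc 1 q, ∀ j ∈ Finset.Icc 1 q, i ≠ j → Disjoint (T i) (T j))
    (hcover : (Finset.Icc 1 q).biUnion T = Finset.univ)
    (hcard : ∀ i ∈ Finset.Icc 1 q, (T i).card ≤ t)
    (horder : ∀ i ∈ Finset.Icc 3 q, ∀ j ∈ T i,
        |h j| * t ≤ ∑ k ∈ T (i - 1), |h k|) :
    ∑ i ∈ Finset.Icc 3 q, Real.sqrt (∑ j ∈ T i, (h j) ^ 2) ≤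
      (∑ j ∈ (T 1)ᶜ, |h j|) / Real.sqrt t := by
  have htR : (0:ℝ) < t := by exact_mod_cast ht
  have hst : (0:ℝ) < Real.sqrt t := Real.sqrt_pos.mpr htR
  -- Step 1: pointwise bound per block
  have key : ∀ i ∈ Finset.Icc 3 q,
      Real.sqrt (∑ j ∈ T i, (h j) ^ 2) ≤ (∑ k ∈ T (i - 1), |h k|) / Real.sqrt t := by
    intro i hi
    set S : ℝ := ∑ k ∈ T (i - 1), |h k| with hS
    have hS0 : 0 ≤ S := Finset.sum_nonneg fun _ _ => abs_nonneg _
    have hiq : i ∈ Finset.Icc 1 q := by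
      simp only [Finset.mem_Icc] at hi ⊢; omega
    have hsum : (∑ j ∈ T i, (h j) ^ 2) ≤ S ^ 2 / t := by
      have hb : ∀ j ∈ T i, (h j) ^ 2 ≤ (S / t) ^ 2 := by
        intro j hj
        have h1 : |h j| * t ≤ S := horder i hi j hj
        have h2 : |h j| ≤ S / t := (le_div_iff₀ htR).mpr h1
        calc (h j) ^ 2 = |h j| ^ 2 := (sq_abs _).symm
          _ ≤ (S / t) ^ 2 := by
              apply pow_le_pow_left₀ (abs_nonneg _) h2
      calc (∑ j ∈ T i, (h j) ^ 2) ≤ (T i).card * (S / t) ^ 2 := by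
            have := Finset.sum_le_card_nsmul (T i) (fun x => h x ^ 2) ((S / t) ^ 2) hb
            simpa [nsmul_eq_mul] using this
        _ ≤ t * (S / t) ^ 2 := by
            apply mul_le_mul_of_nonneg_right _ (sq_nonneg _)
            exact_mod_cast hcard i hiq
        _ = S ^ 2 / t := by field_simp
    calc Real.sqrt (∑ j ∈ T i, (h j) ^ 2) ≤ Real.sqrt (S ^ 2 / t) :=
          Real.sqrt_le_sqrt hsum
      _ = S / Real.sqrt t := by
          rw [Real.sqrt_div (sq_nonneg S), Real.sqrt_sq hS0]
  -- Step 2: sum up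
  have step2 : ∑ i ∈ Finset.Icc 3 q, Real.sqrt (∑ j ∈ T i, (h j) ^ 2)
      ≤ (∑ i ∈ Finset.Icc 3 q, ∑ k ∈ T (i - 1), |h k|) / Real.sqrt t := by
    rw [Finset.sum_div]
    exact Finset.sum_le_sum key
  refine step2.trans ?_
  gcongr
  -- reindex and bound the l1 sums
  have hresum : ∑ i ∈ Finset.Icc 3 q, ∑ k ∈ T (i - 1), |h k|
      = ∑ i ∈ Finset.Icc 2 (q - 1), ∑ k ∈ T i, |h k| := by
    apply Finset.sum_nbij' (fun i => i - 1) (fun i => i + 1)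
    · intro i hi; simp only [Finset.mem_Icc] at hi ⊢; omega
    · intro i hi; simp only [Finset.mem_Icc] at hi ⊢; omega
    · intro i hi; simp only [Finset.mem_Icc] at hi; omega
    · intro i hi; simp only [Finset.mem_Icc] at hi; omega
    · intro i hi; rfl
  rw [hresum]
  have hsub : Finset.Icc 2 (q - 1) ⊆ Finset.Icc 1 q := by
    intro i hi; simp only [Finset.mem_Icc] at hi ⊢; omega
  have hpd : ((Finset.Icc 2 (q - 1) : Finset ℕ) : Set ℕ).PairwiseDisjoint T := by
    intro a ha b hb hab
    exact hdisj a (hsub ha) b (hsub hb) hab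
  rw [← Finset.sum_biUnion hpd]
  apply Finset.sum_le_sum_of_subset_of_nonneg
  · intro x hx
    simp only [Finset.mem_biUnion] at hx
    obtain ⟨i, hi, hxi⟩ := hx
    have h1 : i ≠ 1 := by
      have := Finset.mem_Icc.mp hi; omega
    have hd := hdisj i (hsub hi) 1 (by
      simp only [Finset.mem_Icc]
      have := Finset.mem_Icc.mp hi; omega) h1
    simp only [Finset.mem_compl]
    exact fun hx1 => (Finset.disjoint_left.mp hd) hxi hx1
  · intro j _ _; exact abs_nonneg _
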